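/- Let g be a positive, symmetric, differentiable density on ℝ, decreasing near +∞, satisfying |(log g)'| ≤ Λ, Ḡ(y) ≍ g(y)y^{κ−1} as y → ∞ for some κ ∈ [1,2], y ↦ (1+y²)g(y) bounded, and g/φ increasing on [0,∞) from (g/φ)(0) < 1 to ∞. Then for every t ∈ (0,1) there exists ω₀ = ω₀(t) > 0 such that for all w ≤ ω₀: χ(r(w,t)) ≤ ζ(w), where r(w,t) = wt/((1−w)(1−t)), χ = (Φ̄/Ḡ)^{-1}, and ζ(w) = β^{-1}(1/w) with β = g/φ − 1. Moreover, for all w ∈ (0,1), χ(w) ≤ ξ(w) ≤ ζ(w), where ξ = (φ/g)^{-1}. -/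

import Mathlib

open MeasureTheory ProbabilityTheory Filter Set
open scoped Classical ENNReal
open scoped Topology

/-- The standard normal density `φ`. -/
noncomputable def stdphi (x : ℝ) : ℝ := (Real.sqrt (2 * Real.pi))⁻¹ * Real.exp (-(x ^ 2) / 2)

/-- The standard normal upper tail function `Φ̄`. -/
noncomputable def Phibar (s : ℝ) : ℝ := ∫ x in Set.Ioi s, stdphi x

/-- The inverse of `Φ̄` (as the generalized inverse). -/
noncomputable def PhibarInv (y : ℝ) : ℝ := sInf {x : ℝ | Phibar x ≤ y}

/-- The upper tail function `Ḡ(s) = ∫_s^∞ g`. -/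
noncomputable def Gbar (g : ℝ → ℝ) (s : ℝ) : ℝ := ∫ x in Set.Ioi s, g x

/-- The ℓ-value `ℓ(x; w, g)`. -/
noncomputable def lval (g : ℝ → ℝ) (w x : ℝ) : ℝ :=
  ((1 - w) * stdphi x) / ((1 - w) * stdphi x + w * g x)

/-- The q-value `q(x; w, g)`. -/
noncomputable def qval (g : ℝ → ℝ) (w x : ℝ) : ℝ :=
  ((1 - w) * Phibar |x|) / ((1 - w) * Phibar |x| + w * Gbar g |x|)

/-- `r(w,t) = wt/((1−w)(1−t))`. -/
noncomputable def rwt (w t : ℝ) : ℝ := w * t / ((1 - w) * (1 - t))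

/-- `β(x) = g(x)/φ(x) − 1`. -/
noncomputable def betaf (g : ℝ → ℝ) (x : ℝ) : ℝ := g x / stdphi x - 1

/-- `m̃(w) = −E₀[β(X,w)]`, the minus-expectation of the score at a null coordinate. -/
noncomputable def mtilde (g : ℝ → ℝ) (w : ℝ) : ℝ :=
  -∫ x, betaf g x / (1 + w * betaf g x) * stdphi x

/-- `m₁(μ,w) = E_μ[β(X,w)]` where `X ~ N(μ,1)`. -/
noncomputable def m1 (g : ℝ → ℝ) (μ w : ℝ) : ℝ :=
  ∫ x, betaf g x / (1 + w * betaf g x) * stdphi (x - μ)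


lemma stdphi_pos (x : ℝ) : 0 < stdphi x := by
  unfold stdphi; positivity

lemma stdphi_integrable : Integrable stdphi := by
  have h := (integrable_exp_neg_mul_sq (by norm_num : (0:ℝ) < 1/2)).const_mul
    ((Real.sqrt (2 * Real.pi))⁻¹)
  refine h.congr (Filter.Eventually.of_forall fun x => ?_)
  unfold stdphi; ring_nf

lemma xstdphi_integrable : Integrable (fun x => x * stdphi x) := by
  have h := (integrable_mul_exp_neg_mul_sq (by norm_num : (0:ℝ) < 1/2)).const_mul
    ((Real.sqrt (2 * Real.pi))⁻¹)
  refine h.congr (Filter.Eventually.of_forall fun x => ?_)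
  unfold stdphi; ring_nf

lemma hasDerivAt_neg_stdphi (x : ℝ) : HasDerivAt (fun y => -stdphi y) (x * stdphi x) x := by
  have h1 : HasDerivAt (fun y : ℝ => -(y ^ 2) / 2) (-x) x := by
    have := ((hasDerivAt_pow 2 x).neg).div_const 2
    refine this.congr_deriv ?_
    push_cast; ring
  have h2 := ((h1.exp).const_mul ((Real.sqrt (2 * Real.pi))⁻¹)).neg
  refine h2.congr_deriv ?_
  unfold stdphi; ring

lemma stdphi_tendsto : Tendsto stdphi atTop (𝓝 0) := by
  have h1 : Tendsto (fun x : ℝ => -(x ^ 2) / 2) atTop atBot := by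
    have h2 : Tendsto (fun x : ℝ => x ^ 2 / 2) atTop atTop :=
      (tendsto_pow_atTop (by norm_num : 2 ≠ 0)).atTop_div_const (by norm_num)
    have := tendsto_neg_atTop_atBot.comp h2
    refine this.congr fun x => by simp [Function.comp]; ring
  have h3 : Tendsto (fun x : ℝ => Real.exp (-(x ^ 2) / 2)) atTop (𝓝 0) :=
    Real.tendsto_exp_comp_nhds_zero.2 h1
  have h4 := h3.const_mul ((Real.sqrt (2 * Real.pi))⁻¹)
  rw [mul_zero] at h4
  exact h4

lemma mills {b : ℝ} (hb : 0 < b) : Phibar b ≤ stdphi b / b := by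
  have key : ∫ x in Set.Ioi b, x * stdphi x = stdphi b := by
    have h := integral_Ioi_of_hasDerivAt_of_tendsto' (f := fun y => -stdphi y)
      (f' := fun x => x * stdphi x) (a := b) (m := 0)
      (fun x _ => hasDerivAt_neg_stdphi x) xstdphi_integrable.integrableOn
      (by simpa using stdphi_tendsto.neg)
    simpa using h
  have mono : Phibar b ≤ ∫ x in Set.Ioi b, b⁻¹ * (x * stdphi x) := by
    refine setIntegral_mono_on stdphi_integrable.integrableOn
      ((xstdphi_integrable.const_mul b⁻¹).integrableOn) measurableSet_Ioi fun x hx => ?_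
    have hx' : b < x := hx
    have h1 : 1 ≤ b⁻¹ * x := by
      rw [inv_mul_eq_div, le_div_iff₀ hb]; linarith
    nlinarith [stdphi_pos x]
  calc Phibar b ≤ ∫ x in Set.Ioi b, b⁻¹ * (x * stdphi x) := mono
    _ = b⁻¹ * ∫ x in Set.Ioi b, x * stdphi x := by rw [MeasureTheory.integral_const_mul]
    _ = stdphi b / b := by rw [key]; ring

lemma pos_setIntegral {f : ℝ → ℝ} {s : Set ℝ} (hf : ∀ x ∈ s, 0 < f x)
    (hint : IntegrableOn f s volume) (hs : 0 < volume s) (hms : MeasurableSet s) :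
    0 < ∫ x in s, f x := by
  rw [setIntegral_pos_iff_support_of_nonneg_ae
    ((ae_restrict_iff' hms).2 (Filter.Eventually.of_forall fun x hx => (hf x hx).le)) hint]
  exact lt_of_lt_of_le hs (measure_mono fun x hx => ⟨(hf x hx).ne', hx⟩)

lemma Gbar_pos' {g : ℝ → ℝ} (hpos : ∀ x, 0 < g x) (hint : Integrable g) (s : ℝ) :
    0 < Gbar g s := by
  refine pos_setIntegral (fun x _ => hpos x) hint.integrableOn ?_ measurableSet_Ioi
  rw [Real.volume_Ioi]; exact ENNReal.zero_lt_top

lemma Phibar_le_mul_Gbar {g : ℝ → ℝ} (hpos : ∀ x, 0 < g x) (hint : Integrable g)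
    (hinc : StrictMonoOn (fun x => g x / stdphi x) (Set.Ici 0))
    {b w : ℝ} (hb : 0 ≤ b) (hw : stdphi b ≤ w * g b) : Phibar b ≤ w * Gbar g b := by
  have hmono := hinc.monotoneOn
  have pt : ∀ z ∈ Set.Ioi b, stdphi z ≤ w * g z := by
    intro z hz
    have hz' : b < z := hz
    have h1 : g b / stdphi b ≤ g z / stdphi z :=
      hmono (Set.mem_Ici.2 hb) (Set.mem_Ici.2 (hb.trans hz'.le)) hz'.le
    rw [div_le_div_iff₀ (stdphi_pos b) (stdphi_pos z)] at h1
    nlinarith [hpos b, hpos z, mul_le_mul_of_nonneg_left hw (hpos z).le]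
  calc Phibar b ≤ ∫ z in Set.Ioi b, w * g z :=
        setIntegral_mono_on stdphi_integrable.integrableOn
          ((hint.const_mul w).integrableOn) measurableSet_Ioi pt
    _ = w * Gbar g b := MeasureTheory.integral_const_mul w g

lemma key_strict {g : ℝ → ℝ} (hpos : ∀ x, 0 < g x) (hint : Integrable g)
    (hinc : StrictMonoOn (fun x => g x / stdphi x) (Set.Ici 0))
    {a b : ℝ} (ha : 0 ≤ a) (hab : a < b) :
    Phibar b * Gbar g a < Phibar a * Gbar g b := by
  have hb0 : (0:ℝ) ≤ b := ha.trans hab.le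
  set c : ℝ := stdphi b / g b with hc
  have hgb := hpos b
  have hφb := stdphi_pos b
  have hcpos : 0 < c := div_pos hφb hgb
  -- strict pointwise bound beyond b
  have hlt : ∀ z ∈ Set.Ioi b, stdphi z < c * g z := by
    intro z hz
    have hz' : b < z := hz
    have h1 : g b / stdphi b < g z / stdphi z :=
      hinc (Set.mem_Ici.2 hb0) (Set.mem_Ici.2 (hb0.trans hz'.le)) hz'
    rw [div_lt_div_iff₀ (stdphi_pos b) (stdphi_pos z)] at h1
    rw [hc, div_mul_eq_mul_div, lt_div_iff₀ hgb]
    nlinarith [hpos z]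
  -- strict bound: Phibar b < c * Gbar g b
  have hA : Phibar b < c * Gbar g b := by
    have hi1 : IntegrableOn (fun z => c * g z - stdphi z) (Set.Ioi b) volume :=
      ((hint.const_mul c).sub stdphi_integrable).integrableOn
    have hposint : 0 < ∫ z in Set.Ioi b, (c * g z - stdphi z) := by
      refine pos_setIntegral (fun z hz => sub_pos.2 (hlt z hz)) hi1 ?_ measurableSet_Ioi
      rw [Real.volume_Ioi]; exact ENNReal.zero_lt_top
    have heq : ∫ z in Set.Ioi b, (c * g z - stdphi z)
        = c * Gbar g b - Phibar b := by
      rw [MeasureTheory.integral_sub (hint.const_mul c).integrableOn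
        stdphi_integrable.integrableOn, MeasureTheory.integral_const_mul]
      rfl
    linarith [heq ▸ hposint]
  -- non-strict bound below b
  have hB : ∫ y in Set.Ioc a b, c * g y ≤ ∫ y in Set.Ioc a b, stdphi y := by
    refine setIntegral_mono_on ((hint.const_mul c).integrableOn)
      stdphi_integrable.integrableOn measurableSet_Ioc fun y hy => ?_
    have hy0 : (0:ℝ) ≤ y := ha.trans hy.1.le
    have h1 : g y / stdphi y ≤ g b / stdphi b :=
      hinc.monotoneOn (Set.mem_Ici.2 hy0) (Set.mem_Ici.2 hb0) hy.2
    rw [div_le_div_iff₀ (stdphi_pos y) (stdphi_pos b)] at h1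
    rw [hc, div_mul_eq_mul_div, div_le_iff₀ hgb]
    nlinarith [stdphi_pos y]
  have hIg : 0 < ∫ y in Set.Ioc a b, g y := by
    refine pos_setIntegral (fun y _ => hpos y) hint.integrableOn ?_ measurableSet_Ioc
    rw [Real.volume_Ioc]; exact ENNReal.ofReal_pos.2 (sub_pos.2 hab)
  have hGb : 0 < Gbar g b := Gbar_pos' hpos hint b
  have hsplitG : Gbar g a = (∫ y in Set.Ioc a b, g y) + Gbar g b := by
    rw [Gbar, Gbar, ← Set.Ioc_union_Ioi_eq_Ioi hab.le,
      setIntegral_union (Set.Ioc_disjoint_Ioi le_rfl) measurableSet_Ioi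
        hint.integrableOn hint.integrableOn]
  have hsplitP : Phibar a = (∫ y in Set.Ioc a b, stdphi y) + Phibar b := by
    rw [Phibar, Phibar, ← Set.Ioc_union_Ioi_eq_Ioi hab.le,
      setIntegral_union (Set.Ioc_disjoint_Ioi le_rfl) measurableSet_Ioi
        stdphi_integrable.integrableOn stdphi_integrable.integrableOn]
  have hcg : ∫ y in Set.Ioc a b, c * g y = c * ∫ y in Set.Ioc a b, g y :=
    MeasureTheory.integral_const_mul c g
  rw [hsplitG, hsplitP]
  rw [hcg] at hB
  nlinarith [mul_lt_mul_of_pos_right hA hIg, mul_le_mul_of_nonneg_right hB hGb.le]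


set_option maxHeartbeats 1000000 in
/-- **Lemma (comparison of the thresholds `χ`, `ξ`, `ζ`).** Let `g` be a positive symmetric
differentiable density, decreasing near `+∞`, with `|(log g)'| ≤ Λ`, `Ḡ(y) ≍ g(y)y^{κ−1}` as
`y → ∞` (`κ ∈ [1,2]`), `(1+y²)g(y)` bounded, and `g/φ` increasing on `[0,∞)` from
`(g/φ)(0) < 1` to `∞`. Then for every `t ∈ (0,1)` there is `ω₀ = ω₀(t) > 0` such that
`χ(r(w,t)) ≤ ζ(w)` for all `w ≤ ω₀`; moreover `χ(w) ≤ ξ(w) ≤ ζ(w)` for all `w ∈ (0,1)`. -/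
theorem chi_xi_zeta_comparison
    (g : ℝ → ℝ) (Λ κ : ℝ)
    (hpos : ∀ x, 0 < g x) (hsymm : ∀ x, g (-x) = g x)
    (hdiff : Differentiable ℝ g) (hdens : ∫ x, g x = 1)
    (hdec : ∃ M : ℝ, StrictAntiOn g (Set.Ici M))
    (hΛ : 0 < Λ) (hlip : ∀ x : ℝ, |deriv (fun y => Real.log (g y)) x| ≤ Λ)
    (hκ : κ ∈ Set.Icc (1 : ℝ) 2)
    (htail : ∃ c C : ℝ, 0 < c ∧ 0 < C ∧ ∃ y₀ : ℝ, ∀ y ≥ y₀,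
      c * (g y * y ^ (κ - 1)) ≤ Gbar g y ∧ Gbar g y ≤ C * (g y * y ^ (κ - 1)))
    (hbdd : ∃ M : ℝ, ∀ y : ℝ, (1 + y ^ 2) * g y ≤ M)
    (hinc : StrictMonoOn (fun x => g x / stdphi x) (Set.Ici 0))
    (h0 : g 0 / stdphi 0 < 1)
    (hinf : Filter.Tendsto (fun x => g x / stdphi x) Filter.atTop Filter.atTop)
    (ξ χ ζ : ℝ → ℝ)
    (hξ : ∀ u : ℝ, 0 < u → u ≤ stdphi 0 / g 0 → 0 ≤ ξ u ∧ stdphi (ξ u) = u * g (ξ u))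
    (hχ : ∀ u : ℝ, 0 < u → u ≤ 1 → 0 ≤ χ u ∧ Phibar (χ u) = u * Gbar g (χ u))
    (hζ : ∀ w : ℝ, 0 < w → w ≤ 1 → 0 ≤ ζ w ∧ betaf g (ζ w) = w⁻¹) :
    (∀ t : ℝ, t ∈ Set.Ioo (0 : ℝ) 1 → ∃ ω₀ : ℝ, 0 < ω₀ ∧ ∀ w : ℝ, 0 < w → w ≤ ω₀ →
        χ (rwt w t) ≤ ζ w) ∧
      (∀ w : ℝ, w ∈ Set.Ioo (0 : ℝ) 1 → χ w ≤ ξ w ∧ ξ w ≤ ζ w) := by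
  have hg_int : Integrable g := by
    by_contra h
    rw [MeasureTheory.integral_undef h] at hdens
    exact one_ne_zero hdens.symm
  constructor
  · rintro t ⟨ht0, ht1⟩
    obtain ⟨c, C, hc, hC, y₀, htail⟩ := htail
    set A : ℝ := max (max y₀ 1) (t * c)⁻¹ with hA
    have hA1 : (1:ℝ) ≤ A := le_max_of_le_left (le_max_right _ _)
    have htc : 0 < t * c := mul_pos ht0 hc
    obtain ⟨x₀, hx₀A, hx₀B⟩ := ((eventually_ge_atTop A).and
      (hinf.eventually (eventually_ge_atTop (3:ℝ)))).exists
    set B := g x₀ / stdphi x₀ with hBdef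
    have hB3 : (3:ℝ) ≤ B := hx₀B
    refine ⟨min (B - 1)⁻¹ ((1 - t)/2),
      lt_min (inv_pos.2 (by linarith)) (by linarith), ?_⟩
    intro w hw0 hw
    have hwB : w ≤ (B - 1)⁻¹ := le_trans hw (min_le_left _ _)
    have hwt : w ≤ (1 - t)/2 := le_trans hw (min_le_right _ _)
    have hwB1 : w * (B - 1) ≤ 1 := by
      calc w * (B - 1) ≤ (B - 1)⁻¹ * (B - 1) :=
            mul_le_mul_of_nonneg_right hwB (by linarith)
        _ = 1 := inv_mul_cancel₀ (by linarith)
    have h1w : B - 1 ≤ w⁻¹ := by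
      have h := mul_le_mul_of_nonneg_left hwB1 (le_of_lt (inv_pos.2 hw0))
      rw [mul_one] at h
      calc B - 1 = w⁻¹ * (w * (B - 1)) := by field_simp
        _ ≤ w⁻¹ := h
    have hw2 : w ≤ 1/2 := by nlinarith
    have hw1 : w < 1 := by linarith
    have hD : 0 < (1 - w) * (1 - t) := by nlinarith
    have hr0 : 0 < rwt w t := by
      unfold rwt; exact div_pos (mul_pos hw0 ht0) hD
    have hr1 : rwt w t ≤ 1 := by
      unfold rwt; rw [div_le_one hD]; nlinarith
    have hrwt : w * t ≤ rwt w t := by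
      unfold rwt; rw [le_div_iff₀ hD]
      have hst : 0 ≤ w + t - w * t := by nlinarith
      nlinarith [mul_nonneg (mul_nonneg hw0.le ht0.le) hst]
    obtain ⟨hζ0, hζβ⟩ := hζ w hw0 hw1.le
    set z := ζ w with hzdef
    have hφz := stdphi_pos z
    have hgz := hpos z
    unfold betaf at hζβ
    have hbz : g z / stdphi z = 1 + w⁻¹ := by linarith
    have hgzeq : g z = (1 + w⁻¹) * stdphi z := by
      rw [div_eq_iff hφz.ne'] at hbz; exact hbz
    have hzx : x₀ ≤ z := by
      by_contra hcon
      push_neg at hcon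
      have hx₀0 : (0:ℝ) ≤ x₀ := le_trans (by linarith) hx₀A
      have hlt2 := hinc (Set.mem_Ici.2 hζ0) (Set.mem_Ici.2 hx₀0) hcon
      have hlt3 : (1:ℝ) + w⁻¹ < B := by rw [← hbz]; exact hlt2
      linarith
    have hzA : A ≤ z := le_trans hx₀A hzx
    have hz1 : (1:ℝ) ≤ z := le_trans hA1 hzA
    have hzy₀ : y₀ ≤ z := le_trans (le_max_of_le_left (le_max_left _ _)) hzA
    have hztc : (t*c)⁻¹ ≤ z := le_trans (le_max_right _ _) hzA
    obtain ⟨htl, -⟩ := htail z hzy₀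
    have hφw : stdphi z ≤ w * g z := by
      rw [hgzeq]
      have he : w * ((1 + w⁻¹) * stdphi z) = (w + 1) * stdphi z := by
        field_simp
      rw [he]; nlinarith
    obtain ⟨hχ0, hχeq⟩ := hχ (rwt w t) hr0 hr1
    have hz0 : (0:ℝ) < z := by linarith
    have hmain : Phibar z ≤ rwt w t * Gbar g z := by
      have h1 : Phibar z ≤ stdphi z / z := mills hz0
      have h2 : stdphi z / z ≤ w * g z / z := by gcongr
      have hu : (1:ℝ) ≤ z ^ (κ - 1) := Real.one_le_rpow hz1 (by linarith [hκ.1])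
      have htcz : 1 ≤ t * c * z := by
        have h := mul_le_mul_of_nonneg_left hztc htc.le
        rwa [mul_inv_cancel₀ htc.ne'] at h
      have h3 : w * g z / z ≤ w * t * (c * (g z * z ^ (κ - 1))) := by
        rw [div_le_iff₀ hz0]
        have h5 : 1 ≤ t * c * z * (z ^ (κ - 1)) := by nlinarith
        nlinarith [mul_le_mul_of_nonneg_left h5 (mul_nonneg hw0.le hgz.le)]
      have h4 : w * t * (c * (g z * z ^ (κ - 1))) ≤ rwt w t * Gbar g z := by
        apply mul_le_mul hrwt htl ?_ hr0.le
        have : (0:ℝ) ≤ z ^ (κ - 1) := Real.rpow_nonneg hz0.le _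
        positivity
      linarith
    by_contra hcon
    push_neg at hcon
    have hk := key_strict hpos hg_int hinc hζ0 hcon
    have hGz := Gbar_pos' hpos hg_int z
    have hGχ := Gbar_pos' hpos hg_int (χ (rwt w t))
    rw [hχeq] at hk
    have hfin := hk.trans_le (mul_le_mul_of_nonneg_right hmain hGχ.le)
    linarith [hfin]
  · rintro w ⟨hw0, hw1⟩
    have hφ0 := stdphi_pos 0
    have hg0 := hpos 0
    have hg0φ : g 0 < stdphi 0 := by
      have := (div_lt_one hφ0).1 h0; linarith
    have hξappl : w ≤ stdphi 0 / g 0 := by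
      rw [le_div_iff₀ hg0]; nlinarith
    obtain ⟨hξ0, hξeq⟩ := hξ w hw0 hξappl
    obtain ⟨hχ0, hχeq⟩ := hχ w hw0 hw1.le
    obtain ⟨hζ0, hζβ⟩ := hζ w hw0 hw1.le
    constructor
    · by_contra hcon
      push_neg at hcon
      have hk := key_strict hpos hg_int hinc hξ0 hcon
      have hP : Phibar (ξ w) ≤ w * Gbar g (ξ w) :=
        Phibar_le_mul_Gbar hpos hg_int hinc hξ0 (le_of_eq hξeq)
      have hGξ := Gbar_pos' hpos hg_int (ξ w)
      have hGχ := Gbar_pos' hpos hg_int (χ w)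
      rw [hχeq] at hk
      have hfin := hk.trans_le (mul_le_mul_of_nonneg_right hP hGχ.le)
      linarith [hfin]
    · by_contra hcon
      push_neg at hcon
      have hlt := hinc (Set.mem_Ici.2 hζ0) (Set.mem_Ici.2 hξ0) hcon
      unfold betaf at hζβ
      have h1 : g (ζ w) / stdphi (ζ w) = 1 + w⁻¹ := by linarith
      have hgξ := hpos (ξ w)
      have hφξ := stdphi_pos (ξ w)
      have h2 : g (ξ w) / stdphi (ξ w) = w⁻¹ := by
        rw [hξeq]; field_simp
      have hlt2 : (1:ℝ) + w⁻¹ < w⁻¹ := by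
        rw [← h1, ← h2]; exact hlt
      linarith
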